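/- arXiv:1403.4486 — 2 statements merged into one kernel-verified Lean document; each statement's English description precedes it below -/
import Mathlib

section
/- Let G be an abelian group generated by elements g_1, g_2, …, g_t. Then f : G → ℂ is a polynomial if and only if there exist natural numbers n_1, n_2, …, n_t such that Δ_{g_i}^{n_i+1} f(x) = 0 holds for all x ∈ G and all i = 1, 2, …, t. -/
/-- The forward difference operator: `(Δ_h f)(x) = f(x + h) - f(x)`. -/
def fdiff {G M : Type*} [Add G] [Sub M] (h : G) (f : G → M) : G → M :=
  fun x => f (x + h) - f x

/-- `p : G → ℂ` is a polynomial: there are additive functions `a_1, …, a_n : G → ℂ`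
and a complex polynomial `P` in `n` variables with `p x = P (a_1 x, …, a_n x)`. -/
def IsPolynomialC {H : Type*} [Add H] (p : H → ℂ) : Prop :=
  ∃ (n : ℕ) (a : Fin n → H → ℂ) (P : MvPolynomial (Fin n) ℂ),
    (∀ i x y, a i (x + y) = a i x + a i y) ∧
    ∀ x, p x = MvPolynomial.eval (fun i => a i x) P

section basic
variable {G : Type*} [Add G]

lemma fdiff_zero_fn (h : G) : fdiff h (fun _ => (0:ℂ)) = fun _ => 0 := by
  funext x; simp [fdiff]

lemma iter_fdiff_zero_fn (h : G) (k : ℕ) : (fdiff h)^[k] (fun _ => (0:ℂ)) = fun _ => 0 := by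
  induction k with
  | zero => rfl
  | succ k ih => rw [Function.iterate_succ_apply, fdiff_zero_fn, ih]

lemma iter_fdiff_zero_fn' (h : G) (k : ℕ) {φ : G → ℂ} (hφ : ∀ x, φ x = 0) :
    ∀ x, (fdiff h)^[k] φ x = 0 := by
  have : φ = fun _ => 0 := funext hφ
  rw [this, iter_fdiff_zero_fn]; intro x; rfl

lemma fdiff_add_fn (h : G) (φ ψ : G → ℂ) :
    fdiff h (fun x => φ x + ψ x) = fun x => fdiff h φ x + fdiff h ψ x := by
  funext x; simp [fdiff]; ring

lemma iter_fdiff_add (h : G) (k : ℕ) (φ ψ : G → ℂ) (x : G) :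
    (fdiff h)^[k] (fun y => φ y + ψ y) x = (fdiff h)^[k] φ x + (fdiff h)^[k] ψ x := by
  induction k generalizing φ ψ with
  | zero => rfl
  | succ k ih =>
      rw [Function.iterate_succ_apply, fdiff_add_fn, ih]
      rw [Function.iterate_succ_apply, Function.iterate_succ_apply]

lemma fdiff_comm (h₁ h₂ : G) (φ : G → ℂ) (hc : ∀ a b : G, a + b = b + a)
    (ha : ∀ a b c : G, a + b + c = a + (b + c)) :
    fdiff h₁ (fdiff h₂ φ) = fdiff h₂ (fdiff h₁ φ) := by
  funext x; simp only [fdiff]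
  rw [ha x h₂ h₁, hc h₂ h₁, ← ha x h₁ h₂]; ring

lemma iter_fdiff_mono (h : G) {k : ℕ} {φ : G → ℂ} (hφ : ∀ x, (fdiff h)^[k] φ x = 0) :
    ∀ j, k ≤ j → ∀ x, (fdiff h)^[j] φ x = 0 := by
  intro j hj x
  obtain ⟨d, rfl⟩ := Nat.exists_eq_add_of_le hj
  rw [Nat.add_comm, Function.iterate_add_apply]
  exact iter_fdiff_zero_fn' h d hφ x

end basic

open Polynomial in
noncomputable def binC (k : ℕ) : Polynomial ℂ :=
  Polynomial.C ((k.factorial : ℂ)⁻¹) * descPochhammer ℂ k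

open Polynomial

lemma binC_zero : binC 0 = 1 := by simp [binC]

lemma binC_eval_zero (k : ℕ) : (binC (k+1)).eval 0 = 0 := by
  simp [binC, descPochhammer_eval_zero]

lemma descPoch_step (k : ℕ) (s : ℂ) :
    (descPochhammer ℂ (k+1)).eval (s+1) - (descPochhammer ℂ (k+1)).eval s
      = ((k:ℂ)+1) * (descPochhammer ℂ k).eval s := by
  have h1 : (descPochhammer ℂ (k+1)).eval (s+1) = (s+1) * (descPochhammer ℂ k).eval s := by
    rw [descPochhammer_succ_left]
    simp [eval_comp]
  have h2 : (descPochhammer ℂ (k+1)).eval s = (descPochhammer ℂ k).eval s * (s - k) := by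
    rw [descPochhammer_succ_right]; simp
  rw [h1, h2]; ring

lemma binC_step (k : ℕ) (s : ℂ) :
    (binC (k+1)).eval (s+1) - (binC (k+1)).eval s = (binC k).eval s := by
  have hk : ((k+1).factorial : ℂ) = ((k:ℂ)+1) * (k.factorial : ℂ) := by
    rw [Nat.factorial_succ]; push_cast; ring
  have hne : ((k:ℂ)+1) ≠ 0 := by
    have := Nat.cast_add_one_ne_zero (R := ℂ) k
    simpa using this
  have hfac : (k.factorial : ℂ) ≠ 0 := Nat.cast_ne_zero.2 (Nat.factorial_ne_zero k)
  simp only [binC, eval_mul, eval_C, ← mul_sub, descPoch_step]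
  rw [hk, mul_inv]
  field_simp

lemma int_const {ψ : ℤ → ℂ} (hψ : ∀ s, fdiff (1:ℤ) ψ s = 0) : ∀ s : ℤ, ψ s = ψ 0 := by
  have key : ∀ s : ℤ, ψ (s + 1) = ψ s := by
    intro s; have := hψ s; simp [fdiff] at this; linear_combination this
  intro s
  induction s using Int.induction_on with
  | zero => rfl
  | succ n ih => rw [key, ih]
  | pred n ih => rw [← ih, ← key (-n - 1)]; norm_num

lemma newton : ∀ (n : ℕ) (ψ : ℤ → ℂ), (∀ s, (fdiff (1:ℤ))^[n+1] ψ s = 0) →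
    ∀ s : ℤ, ψ s = ∑ k ∈ Finset.range (n+1), ((fdiff (1:ℤ))^[k] ψ) 0 * (binC k).eval (s:ℂ) := by
  intro n
  induction n with
  | zero =>
      intro ψ hψ s
      simp [binC_zero]
      exact int_const (fun s => by have := hψ s; simpa using this) s
  | succ n ih =>
      intro ψ hψ s
      set c : ℕ → ℂ := fun k => ((fdiff (1:ℤ))^[k] ψ) 0 with hc
      set gg : ℤ → ℂ := fun s => ψ s - ∑ k ∈ Finset.range (n+2), c k * (binC k).eval (s:ℂ)
        with hg
      have hΔψ : ∀ s, (fdiff (1:ℤ))^[n+1] (fdiff 1 ψ) s = 0 := by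
        intro s
        rw [← Function.iterate_succ_apply]
        exact hψ s
      have hgconst : ∀ s, fdiff (1:ℤ) gg s = 0 := by
        intro s
        have expand : fdiff (1:ℤ) gg s
            = fdiff 1 ψ s - ∑ k ∈ Finset.range (n+2),
                c k * ((binC k).eval ((s:ℂ)+1) - (binC k).eval (s:ℂ)) := by
          simp only [fdiff, hg]
          push_cast
          simp only [mul_sub, Finset.sum_sub_distrib]
          ring
        rw [expand]
        rw [Finset.sum_range_succ']
        simp only [binC_step, binC_zero, eval_one, sub_self, mul_zero, add_zero]
        have ihΔ := ih (fdiff 1 ψ) hΔψ s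
        rw [ihΔ]
        have : ∀ k, c (k+1) = ((fdiff (1:ℤ))^[k] (fdiff 1 ψ)) 0 := by
          intro k; rw [hc]; simp [Function.iterate_succ_apply]
        simp only [this]
        ring
      have h0 : gg 0 = 0 := by
        rw [hg]
        simp only [Int.cast_zero]
        rw [Finset.sum_range_succ']
        simp [binC_eval_zero, binC_zero, hc]
      have := int_const hgconst s
      rw [h0] at this
      have : ψ s = ∑ k ∈ Finset.range (n+2), c k * (binC k).eval (s:ℂ) := by
        have h2 := this; rw [hg] at h2; linear_combination h2
      simpa using this


section mult
variable {t : ℕ}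

lemma cons_add_zero (s : ℤ) (m' : Fin t → ℤ) :
    (Fin.cons (s+1) m' : Fin (t+1) → ℤ) = Fin.cons s m' + Pi.single (0 : Fin (t+1)) (1:ℤ) := by
  funext i
  refine Fin.cases ?_ (fun j => ?_) i
  · simp
  · simp [Pi.single_eq_of_ne (Fin.succ_ne_zero j)]

lemma cons_add_succ (s : ℤ) (m' : Fin t → ℤ) (i : Fin t) :
    (Fin.cons s (m' + Pi.single i (1:ℤ)) : Fin (t+1) → ℤ) = Fin.cons s m' + Pi.single i.succ (1:ℤ) := by
  funext j
  refine Fin.cases ?_ (fun j => ?_) j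
  · simp [Pi.single_eq_of_ne (Ne.symm (Fin.succ_ne_zero i))]
  · by_cases hji : j = i
    · subst hji; simp
    · simp [Pi.single_eq_of_ne hji, Pi.single_eq_of_ne (fun hh => hji (Fin.succ_injective _ hh))]

lemma slice1 (k : ℕ) : ∀ (F : (Fin (t+1) → ℤ) → ℂ) (m' : Fin t → ℤ) (s : ℤ),
    (fdiff (1:ℤ))^[k] (fun s => F (Fin.cons s m')) s
      = (fdiff (Pi.single (0 : Fin (t+1)) (1:ℤ)))^[k] F (Fin.cons s m') := by
  induction k with
  | zero => intro F m' s; rfl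
  | succ k ih =>
      intro F m' s
      rw [Function.iterate_succ_apply, Function.iterate_succ_apply]
      have : fdiff (1:ℤ) (fun s => F (Fin.cons s m'))
          = fun s => (fdiff (Pi.single (0 : Fin (t+1)) (1:ℤ)) F) (Fin.cons s m') := by
        funext u; simp only [fdiff, cons_add_zero]
      rw [this, ih]

lemma restr (N : ℕ) (i : Fin t) : ∀ (H : (Fin (t+1) → ℤ) → ℂ) (m' : Fin t → ℤ),
    (fdiff (Pi.single i (1:ℤ)))^[N] (fun m' => H (Fin.cons 0 m')) m'
      = (fdiff (Pi.single i.succ (1:ℤ)))^[N] H (Fin.cons 0 m') := by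
  induction N with
  | zero => intro H m'; rfl
  | succ N ih =>
      intro H m'
      rw [Function.iterate_succ_apply, Function.iterate_succ_apply]
      have : fdiff (Pi.single i (1:ℤ)) (fun m' => H (Fin.cons 0 m'))
          = fun m' => (fdiff (Pi.single i.succ (1:ℤ)) H) (Fin.cons 0 m') := by
        funext u; simp only [fdiff, cons_add_succ]
      rw [this, ih]

lemma fdiff_comm' {α : Type*} [AddCommMonoid α] (h₁ h₂ : α) (φ : α → ℂ) :
    fdiff h₁ (fdiff h₂ φ) = fdiff h₂ (fdiff h₁ φ) := by
  funext x; simp only [fdiff]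
  rw [add_right_comm]; ring

lemma iter_fdiff_comm {α : Type*} [AddCommMonoid α] (h₁ h₂ : α) (k N : ℕ) (φ : α → ℂ) :
    (fdiff h₁)^[k] ((fdiff h₂)^[N] φ) = (fdiff h₂)^[N] ((fdiff h₁)^[k] φ) := by
  have : Function.Commute (fdiff h₁) (fdiff h₂) := fun ψ => fdiff_comm' h₁ h₂ ψ
  exact (this.iterate_iterate k N) φ

end mult

open MvPolynomial in
lemma mult : ∀ (t : ℕ) (n : Fin t → ℕ) (F : (Fin t → ℤ) → ℂ),
    (∀ i m, (fdiff (Pi.single i (1:ℤ)))^[n i + 1] F m = 0) →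
    ∃ P : MvPolynomial (Fin t) ℂ, ∀ m, F m = MvPolynomial.eval (fun i => (m i : ℂ)) P := by
  intro t
  induction t with
  | zero =>
      intro n F _
      refine ⟨MvPolynomial.C (F finZeroElim), fun m => ?_⟩
      rw [MvPolynomial.eval_C]
      congr 1
      exact Subsingleton.elim _ _
  | succ t ih =>
      intro n F hF
      set e0 : Fin (t+1) → ℤ := Pi.single 0 1 with he0
      set c : ℕ → (Fin t → ℤ) → ℂ :=
        fun k m' => (fdiff e0)^[k] F (Fin.cons 0 m') with hcdef
      -- each c k satisfies the difference conditions for n ∘ Fin.succ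
      have hck : ∀ k i m', (fdiff (Pi.single i (1:ℤ)))^[n i.succ + 1] (c k) m' = 0 := by
        intro k i m'
        have : c k = fun m' => ((fdiff e0)^[k] F) (Fin.cons 0 m') := rfl
        rw [this, restr]
        rw [iter_fdiff_comm]
        exact iter_fdiff_zero_fn' _ k (fun m => hF i.succ m) _
      choose Pk hPk using fun k => ih (fun i => n i.succ) (c k) (hck k)
      refine ⟨∑ k ∈ Finset.range (n 0 + 1),
        MvPolynomial.rename Fin.succ (Pk k) * Polynomial.aeval (MvPolynomial.X 0) (binC k),
        fun m => ?_⟩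
      -- Newton in the first variable
      have hnewt := newton (n 0) (fun s => F (Fin.cons s (Fin.tail m)))
        (fun s => by rw [slice1]; exact hF 0 _) (m 0)
      rw [Fin.cons_self_tail m] at hnewt
      rw [hnewt]
      rw [map_sum]
      refine Finset.sum_congr rfl (fun k _ => ?_)
      rw [MvPolynomial.eval_mul, MvPolynomial.eval_rename]
      have h1 : ((fdiff (1:ℤ))^[k] fun s => F (Fin.cons s (Fin.tail m))) 0
          = c k (Fin.tail m) := by rw [slice1]
      have h2 : MvPolynomial.eval ((fun i => (m i : ℂ)) ∘ Fin.succ) (Pk k)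
          = c k (Fin.tail m) := (hPk k (Fin.tail m)).symm
      have evalaev : ∀ (q : MvPolynomial (Fin (t+1)) ℂ),
          MvPolynomial.eval (fun i => (m i : ℂ)) q
            = MvPolynomial.aeval (R := ℂ) (fun i => (m i : ℂ)) q := by
        intro q
        rw [← MvPolynomial.coe_aeval_eq_eval]
        rfl
      have h3 : MvPolynomial.eval (fun i => (m i : ℂ))
            ((Polynomial.aeval (MvPolynomial.X (0 : Fin (t+1)) : MvPolynomial (Fin (t+1)) ℂ)) (binC k))
          = (binC k).eval ((m 0 : ℂ)) := by
        rw [evalaev, ← Polynomial.aeval_algHom_apply]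
        simp only [MvPolynomial.aeval_X]
        exact congrFun (Polynomial.coe_aeval_eq_eval _) _
      rw [h1, ← h2, h3]

lemma cast_cons (s : ℤ) (m' : Fin t → ℤ) :
    (fun i => (((Fin.cons s m' : Fin (t+1) → ℤ)) i : ℂ)) = Fin.cons (s:ℂ) (fun i => (m' i : ℂ)) := by
  funext i
  refine Fin.cases ?_ (fun j => ?_) i <;> simp

lemma dens : ∀ (t : ℕ) (P : MvPolynomial (Fin t) ℂ),
    (∀ m : Fin t → ℤ, MvPolynomial.eval (fun i => (m i : ℂ)) P = 0) → P = 0 := by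
  intro t
  induction t with
  | zero =>
      intro P hP
      rw [MvPolynomial.eq_C_of_isEmpty P]
      have := hP finZeroElim
      rw [MvPolynomial.eq_C_of_isEmpty P, MvPolynomial.eval_C] at this
      rw [this, map_zero]
  | succ t ih =>
      intro P hP
      set q := MvPolynomial.finSuccEquiv ℂ t P with hqdef
      have hq : ∀ j, q.coeff j = 0 := by
        intro j
        apply ih
        intro m'
        set r : Polynomial ℂ := q.map (MvPolynomial.eval (fun i => (m' i : ℂ))) with hrdef
        have hr : r = 0 := by
          apply Polynomial.eq_zero_of_infinite_isRoot
          apply Set.Infinite.mono (s := Set.range (fun s : ℤ => (s : ℂ)))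
          · rintro _ ⟨s, rfl⟩
            have := hP (Fin.cons s m')
            rw [cast_cons, MvPolynomial.eval_eq_eval_mv_eval'] at this
            exact this
          · exact Set.infinite_range_of_injective (fun a b hab => by exact_mod_cast hab)
        have : r.coeff j = 0 := by rw [hr]; rfl
        rw [hrdef, Polynomial.coeff_map] at this
        exact this
      have hq0 : q = 0 := Polynomial.ext (fun j => by rw [hq j]; rfl)
      have := (MvPolynomial.finSuccEquiv ℂ t).injective (a₁ := P) (a₂ := 0)
      apply this
      rw [map_zero, ← hqdef, hq0]

section forward
variable {G : Type*} [AddCommGroup G] {h : G}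

lemma shift_iter (h : G) (k : ℕ) (φ : G → ℂ) :
    (fdiff h)^[k] (fun x => φ (x + h)) = fun x => (fdiff h)^[k] φ (x + h) := by
  induction k generalizing φ with
  | zero => rfl
  | succ k ih =>
      rw [Function.iterate_succ_apply, Function.iterate_succ_apply]
      rw [show fdiff h (fun x => φ (x+h)) = fun x => (fdiff h φ) (x+h) from rfl, ih]

lemma leib : ∀ (N m n : ℕ) (φ ψ : G → ℂ), m + n = N →
    (∀ x, (fdiff h)^[m] φ x = 0) → (∀ x, (fdiff h)^[n] ψ x = 0) →
    ∀ x, (fdiff h)^[m + n] (fun y => φ y * ψ y) x = 0 := by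
  intro N
  induction N using Nat.strong_induction_on with
  | _ N IH =>
    intro m n φ ψ hN hφ hψ x
    match m, n with
    | 0, n =>
        exact iter_fdiff_zero_fn' h _ (fun y => by have h0 := hφ y; simp only [Function.iterate_zero, id_eq] at h0; rw [h0, zero_mul]) x
    | m+1, 0 =>
        exact iter_fdiff_zero_fn' h _ (fun y => by have h0 := hψ y; simp only [Function.iterate_zero, id_eq] at h0; rw [h0, mul_zero]) x
    | m+1, n+1 =>
        have hsum : (m+1) + (n+1) = (m+1+n) + 1 := by omega
        rw [hsum, Function.iterate_succ_apply]
        have hexp : fdiff h (fun y => φ y * ψ y)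
            = fun y => (fun z => φ (z+h)) y * (fdiff h ψ) y + (fdiff h φ) y * ψ y := by
          funext y; simp [fdiff]; ring
        rw [hexp]
        rw [iter_fdiff_add]
        have e1 : ∀ x, (fdiff h)^[(m+1) + n] (fun y => φ (y+h) * (fdiff h ψ) y) x = 0 := by
          apply IH (m+1+n) (by omega) (m+1) n _ _ rfl
          · intro x; rw [congrFun (shift_iter h (m+1) φ) x, hφ]
          · intro x; rw [← Function.iterate_succ_apply]; exact hψ x
        have e2 : ∀ x, (fdiff h)^[m + (n+1)] (fun y => (fdiff h φ) y * ψ y) x = 0 := by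
          apply IH (m+(n+1)) (by omega) m (n+1) _ _ rfl
          · intro x; rw [← Function.iterate_succ_apply]; exact hφ x
          · exact hψ
        have := e1 x
        have := e2 x
        rw [show m+1+n = (m+1)+n from rfl]
        rw [e1 x, show (m+1)+n = m+(n+1) by omega, e2 x, add_zero]

end forward

section good
variable {G : Type*} [AddCommGroup G]

def Good (h : G) (φ : G → ℂ) : Prop := ∃ N, ∀ x, (fdiff h)^[N] φ x = 0

lemma good_const (h : G) (c : ℂ) : Good h (fun _ => c) :=
  ⟨1, fun x => by simp [fdiff]⟩

lemma good_additive (h : G) (a : G → ℂ) (ha : ∀ x y, a (x + y) = a x + a y) : Good h a := by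
  refine ⟨2, fun x => ?_⟩
  have h1 : fdiff h a = fun _ => a h := by
    funext y; simp [fdiff, ha]
  show (fdiff h)^[1] (fdiff h a) x = 0
  rw [h1]
  simpa using (good_const h (a h)).choose_spec x |>.symm ▸ (by simp [fdiff] : fdiff h (fun _ => a h) x = 0)

lemma good_add {h : G} {φ ψ : G → ℂ} (hφ : Good h φ) (hψ : Good h ψ) :
    Good h (fun x => φ x + ψ x) := by
  obtain ⟨N1, h1⟩ := hφ
  obtain ⟨N2, h2⟩ := hψ
  refine ⟨N1 + N2, fun x => ?_⟩
  rw [iter_fdiff_add]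
  rw [iter_fdiff_mono h h1 _ (by omega) x, iter_fdiff_mono h h2 _ (by omega) x, add_zero]

lemma good_mul {h : G} {φ ψ : G → ℂ} (hφ : Good h φ) (hψ : Good h ψ) :
    Good h (fun x => φ x * ψ x) := by
  obtain ⟨N1, h1⟩ := hφ
  obtain ⟨N2, h2⟩ := hψ
  exact ⟨N1 + N2, leib (N1 + N2) N1 N2 φ ψ rfl h1 h2⟩

lemma good_eval (h : G) {n : ℕ} (a : Fin n → G → ℂ) (ha : ∀ i x y, a i (x + y) = a i x + a i y)
    (P : MvPolynomial (Fin n) ℂ) : Good h (fun x => MvPolynomial.eval (fun i => a i x) P) := by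
  induction P using MvPolynomial.induction_on with
  | C c => simpa [MvPolynomial.eval_C] using good_const h c
  | add p q hp hq =>
      have := good_add hp hq
      simpa [MvPolynomial.eval_add] using this
  | mul_X p i hp =>
      have := good_mul hp (good_additive h (a i) (ha i))
      simpa [MvPolynomial.eval_mul, MvPolynomial.eval_X] using this

end good

section assembly
variable {G : Type*} [AddCommGroup G] {t : ℕ}

noncomputable def piHom (g : Fin t → G) : (Fin t → ℤ) →+ G where
  toFun m := ∑ i, m i • g i
  map_zero' := by simp
  map_add' m₁ m₂ := by
    simp only [Pi.add_apply, add_zsmul]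
    rw [Finset.sum_add_distrib]

lemma piHom_single (g : Fin t → G) (i : Fin t) : piHom g (Pi.single i 1) = g i := by
  have h0 : piHom g (Pi.single i 1) = ∑ j, (Pi.single i (1:ℤ) : Fin t → ℤ) j • g j := rfl
  rw [h0, Fintype.sum_eq_single i (fun j hj => by rw [Pi.single_eq_of_ne hj, zero_zsmul])]
  simp

lemma piHom_surj (g : Fin t → G) (hgen : AddSubgroup.closure (Set.range g) = ⊤) :
    Function.Surjective (piHom g) := by
  have hle : AddSubgroup.closure (Set.range g) ≤ (piHom g).range := by
    rw [AddSubgroup.closure_le]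
    rintro _ ⟨i, rfl⟩
    exact ⟨Pi.single i 1, piHom_single g i⟩
  intro x
  have : x ∈ (piHom g).range := hle (by rw [hgen]; trivial)
  exact this

lemma iter_fdiff_comp (g : Fin t → G) (i : Fin t) (N : ℕ) : ∀ (f : G → ℂ),
    (fdiff (Pi.single i (1:ℤ)))^[N] (f ∘ (piHom g)) = ((fdiff (g i))^[N] f) ∘ (piHom g) := by
  induction N with
  | zero => intro f; rfl
  | succ N ih =>
      intro f
      rw [Function.iterate_succ_apply, Function.iterate_succ_apply]
      have : fdiff (Pi.single i (1:ℤ)) (f ∘ piHom g) = (fdiff (g i) f) ∘ piHom g := by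
        funext m
        show f (piHom g (m + Pi.single i 1)) - f (piHom g m) = _
        rw [map_add, piHom_single]
        rfl
      rw [this, ih]

lemma mv_eval_eq_aeval (z : Fin t → ℂ) (q : MvPolynomial (Fin t) ℂ) :
    MvPolynomial.eval z q = MvPolynomial.aeval (R := ℂ) z q := by
  rw [← MvPolynomial.coe_aeval_eq_eval]
  rfl

end assembly

section inv
variable {t : ℕ}

lemma inv_step (P : MvPolynomial (Fin t) ℂ) (w : Fin t → ℤ)
    (h0 : ∀ m : Fin t → ℤ, MvPolynomial.eval (fun i => ((m i + w i : ℤ) : ℂ)) P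
      = MvPolynomial.eval (fun i => (m i : ℂ)) P) :
    ∀ z : Fin t → ℂ, MvPolynomial.eval (fun i => z i + (w i : ℂ)) P = MvPolynomial.eval z P := by
  set R := MvPolynomial.aeval (fun i => MvPolynomial.X i + MvPolynomial.C ((w i : ℂ))) P - P
    with hR
  have hkey : ∀ z : Fin t → ℂ, MvPolynomial.eval z R
      = MvPolynomial.eval (fun i => z i + (w i:ℂ)) P - MvPolynomial.eval z P := by
    intro z
    rw [hR, map_sub]
    congr 1
    rw [mv_eval_eq_aeval, MvPolynomial.comp_aeval_apply]
    simp only [map_add, MvPolynomial.aeval_X, MvPolynomial.aeval_C, Algebra.algebraMap_self,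
      RingHom.id_apply]
    rw [← mv_eval_eq_aeval]
  have hR0 : R = 0 := by
    apply dens
    intro m
    rw [hkey]
    have := h0 m
    push_cast at this
    rw [this, sub_self]
  intro z
  have := hkey z
  rw [hR0, map_zero] at this
  linear_combination -this

lemma inv_span (P : MvPolynomial (Fin t) ℂ) (S : Set (Fin t → ℂ))
    (hS : ∀ u ∈ S, ∀ z, MvPolynomial.eval (z + u) P = MvPolynomial.eval z P) :
    ∀ u ∈ Submodule.span ℂ S, ∀ z, MvPolynomial.eval (z + u) P = MvPolynomial.eval z P := by
  intro u hu
  induction hu using Submodule.span_induction with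
  | mem x hx => exact hS x hx
  | zero => intro z; rw [add_zero]
  | add x y hx hy ihx ihy =>
      intro z
      rw [← add_assoc, ihy (z+x), ihx z]
  | smul c x hx ihx =>
      have hzsub : ∀ z, MvPolynomial.eval z P = MvPolynomial.eval (z - x) P := by
        intro z
        conv_lhs => rw [show z = (z-x)+x by abel]
        rw [ihx]
      have hint : ∀ (N : ℤ) (z : Fin t → ℂ),
          MvPolynomial.eval (z + N • x) P = MvPolynomial.eval z P := by
        intro N
        induction N using Int.induction_on with
        | zero => intro z; rw [zero_smul, add_zero]
        | succ n ih =>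
            intro z
            have harr : z + ((n:ℤ)+1) • x = (z + x) + (n:ℤ) • x := by
              rw [add_smul, one_smul]; abel
            rw [harr, ih, ihx]
        | pred n ih =>
            intro z
            have harr : z + (-(n:ℤ)-1) • x = (z - x) + (-(n:ℤ)) • x := by
              rw [sub_smul, one_smul]; abel
            rw [harr, ih, ← hzsub]
      intro z
      set ρ : Polynomial ℂ := MvPolynomial.aeval
        (fun i => Polynomial.C (z i) + Polynomial.C (x i) * Polynomial.X) P with hρ
      have heval : ∀ s : ℂ, ρ.eval s = MvPolynomial.eval (z + s • x) P := by
        intro s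
        calc Polynomial.eval s ρ = Polynomial.aeval s ρ :=
              (congrFun (Polynomial.coe_aeval_eq_eval s) ρ).symm
          _ = MvPolynomial.aeval (fun i => (Polynomial.aeval s : Polynomial ℂ →ₐ[ℂ] ℂ)
                (Polynomial.C (z i) + Polynomial.C (x i) * Polynomial.X)) P := by
              rw [hρ]; exact MvPolynomial.comp_aeval_apply _ (Polynomial.aeval s : Polynomial ℂ →ₐ[ℂ] ℂ) P
          _ = MvPolynomial.eval (z + s • x) P := by
              rw [mv_eval_eq_aeval]
              have hfn : (fun i => (Polynomial.aeval s : Polynomial ℂ →ₐ[ℂ] ℂ)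
                  (Polynomial.C (z i) + Polynomial.C (x i) * Polynomial.X)) = z + s • x := by
                funext i
                simp only [map_add, map_mul, Polynomial.aeval_C, Polynomial.aeval_X,
                  Pi.add_apply, Pi.smul_apply, smul_eq_mul, Algebra.algebraMap_self,
                  RingHom.id_apply]
                ring
              rw [hfn]
      have hroots : ρ - Polynomial.C (MvPolynomial.eval z P) = 0 := by
        apply Polynomial.eq_zero_of_infinite_isRoot
        apply Set.Infinite.mono (s := Set.range (fun s : ℤ => (s:ℂ)))
        · rintro _ ⟨N, rfl⟩
          show Polynomial.IsRoot _ _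
          have hcast : ((N:ℂ)) • x = N • x := Int.cast_smul_eq_zsmul ℂ N x
          simp only [Polynomial.IsRoot, Polynomial.eval_sub, Polynomial.eval_C, heval, hcast,
            hint N z, sub_self]
        · exact Set.infinite_range_of_injective (fun a b hab => by exact_mod_cast hab)
      have hρC : ρ = Polynomial.C (MvPolynomial.eval z P) := sub_eq_zero.mp hroots
      rw [← heval c, hρC, Polynomial.eval_C]

end inv

theorem polynomial_iff_iterated_diff_of_generators {G : Type*} [AddCommGroup G] {t : ℕ}
    (g : Fin t → G) (hgen : AddSubgroup.closure (Set.range g) = ⊤) (f : G → ℂ) :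
    IsPolynomialC f ↔
      ∃ n : Fin t → ℕ, ∀ i : Fin t, ∀ x : G, (fdiff (g i))^[n i + 1] f x = 0 := by
  constructor
  · rintro ⟨n, a, P, ha, hp⟩
    have hfeq : f = fun x => MvPolynomial.eval (fun i => a i x) P := funext hp
    have hgood : ∀ i : Fin t, ∃ N, ∀ x, (fdiff (g i))^[N] f x = 0 := by
      intro i
      rw [hfeq]
      exact good_eval (g i) a ha P
    choose N hN using hgood
    exact ⟨N, fun i x => iter_fdiff_mono (g i) (hN i) (N i + 1) (Nat.le_succ _) x⟩
  · rintro ⟨n, hn⟩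
    have hsurj := piHom_surj g hgen
    have hcond : ∀ i m, (fdiff (Pi.single i (1:ℤ)))^[n i + 1] (f ∘ piHom g) m = 0 := by
      intro i m
      rw [congrFun (iter_fdiff_comp g i (n i + 1) f) m]
      exact hn i (piHom g m)
    obtain ⟨P, hP⟩ := mult t n (f ∘ piHom g) hcond
    set S : Set (Fin t → ℂ) :=
      {z | ∃ w : Fin t → ℤ, piHom g w = 0 ∧ z = fun i => (w i : ℂ)} with hSdef
    have hSinv : ∀ u ∈ S, ∀ z, MvPolynomial.eval (z + u) P = MvPolynomial.eval z P := by
      intro u hu z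
      simp only [hSdef, Set.mem_setOf_eq] at hu
      obtain ⟨w, hw0, rfl⟩ := hu
      have h0 : ∀ m : Fin t → ℤ, MvPolynomial.eval (fun i => ((m i + w i : ℤ):ℂ)) P
          = MvPolynomial.eval (fun i => (m i:ℂ)) P := by
        intro m
        have h1 : (fun i => ((m i + w i : ℤ):ℂ)) = fun i => (((m+w) i : ℤ):ℂ) := rfl
        rw [h1, ← hP (m+w), ← hP m]
        show f (piHom g (m+w)) = f (piHom g m)
        rw [map_add, hw0, add_zero]
      exact inv_step P w h0 z
    have hU := inv_span P S hSinv
    obtain ⟨V, hV⟩ := Submodule.exists_isCompl (Submodule.span ℂ S)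
    set prl : (Fin t → ℂ) →ₗ[ℂ] (Fin t → ℂ) :=
      V.subtype ∘ₗ (Submodule.projectionOnto V (Submodule.span ℂ S) hV.symm) with hprl
    have hpr0 : ∀ u ∈ Submodule.span ℂ S, prl u = 0 := by
      intro u hu
      rw [hprl]
      simp [Submodule.projectionOnto_apply_of_mem_right hV.symm hu]
    have hprV : ∀ v : V, prl (v : Fin t → ℂ) = (v : Fin t → ℂ) := by
      intro v
      rw [hprl]
      simp only [LinearMap.coe_comp, Function.comp_apply, Submodule.coe_subtype]
      rw [Submodule.linearProjOfIsCompl_apply_left hV.symm v]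
    have hsub : ∀ z, z - prl z ∈ Submodule.span ℂ S := by
      intro z
      have hz : z ∈ (Submodule.span ℂ S) ⊔ V := by rw [hV.sup_eq_top]; trivial
      obtain ⟨u, hu, v, hv, rfl⟩ := Submodule.mem_sup.mp hz
      have h2 : prl (u + v) = v := by
        rw [map_add, hpr0 u hu, hprV ⟨v, hv⟩, zero_add]
      rw [h2]
      simpa using hu
    set σf := Function.surjInv hsurj with hσf
    have hσ : ∀ x, piHom g (σf x) = x := fun x => Function.surjInv_eq hsurj x
    have hkerS : ∀ m m' : Fin t → ℤ, piHom g m = piHom g m' →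
        prl (fun j => (m j : ℂ)) = prl (fun j => (m' j : ℂ)) := by
      intro m m' hmm
      have hw : (fun j => (m j:ℂ)) - (fun j => (m' j:ℂ)) ∈ Submodule.span ℂ S := by
        apply Submodule.subset_span
        refine ⟨m - m', by rw [map_sub, hmm, sub_self], ?_⟩
        funext j
        show (m j : ℂ) - (m' j : ℂ) = (((m - m') j : ℤ) : ℂ)
        simp only [Pi.sub_apply]
        push_cast
        ring
      have h3 := hpr0 _ hw
      rw [map_sub] at h3
      exact sub_eq_zero.mp h3
    refine ⟨t, fun i x => prl (fun j => ((σf x) j : ℂ)) i, P, ?_, ?_⟩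
    · intro i x y
      have h1 : piHom g (σf (x+y)) = piHom g (σf x + σf y) := by
        rw [map_add, hσ, hσ, hσ]
      have h2 := hkerS _ _ h1
      have hcastadd : (fun j => ((σf x + σf y) j : ℂ))
          = (fun j => ((σf x) j:ℂ)) + (fun j => ((σf y) j : ℂ)) := by
        funext j
        show (((σf x) j + (σf y) j : ℤ) : ℂ) = _
        push_cast
        rfl
      show prl (fun j => ((σf (x+y)) j : ℂ)) i
          = prl (fun j => ((σf x) j : ℂ)) i + prl (fun j => ((σf y) j : ℂ)) i
      rw [h2, hcastadd, map_add]
      rfl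
    · intro x
      have h1 : f x = (f ∘ piHom g) (σf x) := by
        show f x = f (piHom g (σf x))
        rw [hσ]
      rw [h1, hP (σf x)]
      set z : Fin t → ℂ := (fun j => ((σf x) j : ℂ)) with hz
      have h3 : MvPolynomial.eval z P = MvPolynomial.eval (prl z) P := by
        have h4 := hU (z - prl z) (hsub z) (prl z)
        rw [show prl z + (z - prl z) = z by abel] at h4
        exact h4
      rw [h3]
end

section
/- Let f : ℝ^d → ℝ be continuous and let N be a natural number such that Δ_h^{N+1} f(x) = 0 for all x, h ∈ ℝ^d. Then f is an ordinary polynomial of total degree at most N. -/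
open Finset Function Polynomial
open scoped fwdDiff

/-- iterate of fwdDiff of eventually-zero stays zero -/
lemma fwdDiff_iter_zero_fun {M G : Type*} [AddCommMonoid M] [AddCommGroup G] (h : M) (j : ℕ) :
    (fwdDiff h)^[j] (fun _ => (0 : G)) = fun _ => 0 := by
  induction j with
  | zero => rfl
  | succ j IH => rw [Function.iterate_succ_apply, show (fwdDiff h) (fun _ => (0:G)) = fun _ => 0 from funext fun x => sub_zero 0, IH]

lemma fwdDiff_iter_eq_zero_of_le {M G : Type*} [AddCommMonoid M] [AddCommGroup G] {h : M}
    {f : M → G} {m k : ℕ} (hm : ∀ x, (fwdDiff h)^[m] f x = 0) (hk : m ≤ k) :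
    ∀ x, (fwdDiff h)^[k] f x = 0 := by
  obtain ⟨j, rfl⟩ := Nat.exists_eq_add_of_le hk
  intro x
  rw [add_comm, Function.iterate_add_apply, funext hm, fwdDiff_iter_zero_fun]

/-- truncated Gregory-Newton formula -/
lemma shift_eq_sum_trunc {M G : Type*} [AddCommMonoid M] [AddCommGroup G] {h : M}
    {f : M → G} {N : ℕ} (hd : ∀ x, (fwdDiff h)^[N+1] f x = 0) (y : M) (n : ℕ) :
    f (y + n • h) = ∑ k ∈ range (N+1), n.choose k • (fwdDiff h)^[k] f y := by
  rw [shift_eq_sum_fwdDiff_iter h f n y]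
  have h1 : range (n+1) ⊆ range (n + N + 2) := by
    apply range_subset_range.mpr; omega
  have h2 : range (N+1) ⊆ range (n + N + 2) := by
    apply range_subset_range.mpr; omega
  rw [Finset.sum_subset h1, Finset.sum_subset h2]
  · intro k _ hk
    rw [mem_range, not_lt] at hk
    rw [fwdDiff_iter_eq_zero_of_le hd (by omega) y, smul_zero]
  · intro k _ hk
    rw [mem_range, not_lt] at hk
    rw [Nat.choose_eq_zero_of_lt (by omega), zero_smul]

/-- congruence: iterated differences only depend on values on the grid -/
lemma fwdDiff_iter_congr {M G : Type*} [AddCommMonoid M] [AddCommGroup G] {h : M}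
    {f g : M → G} {k : ℕ} {x : M} (hfg : ∀ j, j ≤ k → f (x + j • h) = g (x + j • h)) :
    (fwdDiff h)^[k] f x = (fwdDiff h)^[k] g x := by
  rw [fwdDiff_iter_eq_sum_shift, fwdDiff_iter_eq_sum_shift]
  apply Finset.sum_congr rfl
  intro j hj
  rw [mem_range] at hj
  rw [hfg j (by omega)]

/-- composition transfer for fwdDiff iterates -/
lemma fwdDiff_iter_comp {A B G : Type*} [AddCommMonoid A] [AddCommMonoid B] [AddCommGroup G]
    (e : A → B) (hA : A) (hB : B) (he : ∀ a, e (a + hA) = e a + hB) (f : B → G) (n : ℕ) :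
    ∀ x, (fwdDiff hA)^[n] (f ∘ e) x = (fwdDiff hB)^[n] f (e x) := by
  induction n generalizing f with
  | zero => intro x; rfl
  | succ n IH =>
    intro x
    rw [Function.iterate_succ_apply, Function.iterate_succ_apply]
    have : (fwdDiff hA) (f ∘ e) = ((fwdDiff hB) f) ∘ e := funext fun a => by
      simp only [fwdDiff, comp_apply, he]
    rw [this]
    exact IH _ x

open Finset Function Polynomial

lemma polyEval_fwdDiff (s : ℝ) (q : ℝ[X]) :
    fwdDiff s (fun t => q.eval t) = fun t => (q.comp (X + C s) - q).eval t := by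
  funext t
  simp [fwdDiff, eval_comp]

lemma natDegree_comp_sub (q : ℝ[X]) (s : ℝ) (n : ℕ) (hq : q.natDegree ≤ n + 1) :
    (q.comp (X + C s) - q).natDegree ≤ n := by
  have hdc : (q.comp (X + C s)).natDegree = q.natDegree := by
    rw [natDegree_comp, natDegree_X_add_C, mul_one]
  rw [natDegree_le_iff_coeff_eq_zero]
  intro m hm
  rw [coeff_sub]
  rcases lt_or_eq_of_le (show q.natDegree ≤ m by omega) with hlt | heq
  · rw [coeff_eq_zero_of_natDegree_lt (by rw [hdc]; exact hlt),
      coeff_eq_zero_of_natDegree_lt hlt, sub_zero]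
  · -- m = q.natDegree, but also n < m ≤ n+1 so m = n+1 and q.natDegree = n+1
    have hm1 : m = q.natDegree := heq.symm
    have : (q.comp (X + C s)).coeff m = q.coeff m := by
      subst hm1
      have h1 : q.coeff q.natDegree = q.leadingCoeff := rfl
      have := coeff_comp_degree_mul_degree (p := q) (q := X + C s) (by rw [natDegree_X_add_C]; omega)
      rw [natDegree_X_add_C, mul_one] at this
      rw [this, leadingCoeff_X_add_C, one_pow, mul_one, h1]
    rw [this, sub_self]

lemma polyEval_fwdDiff_iter_eq_zero (N : ℕ) :
    ∀ (q : ℝ[X]), q.natDegree ≤ N → ∀ (s x : ℝ), (fwdDiff s)^[N+1] (fun t => q.eval t) x = 0 := by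
  induction N with
  | zero =>
    intro q hq s x
    obtain ⟨c, rfl⟩ := Polynomial.natDegree_eq_zero.mp (Nat.le_zero.mp hq)
    simp [fwdDiff]
  | succ N IH =>
    intro q hq s x
    rw [Function.iterate_succ_apply, polyEval_fwdDiff]
    exact IH _ (natDegree_comp_sub q s N hq) s x

open Finset Function Polynomial Filter

section oneD
variable (N : ℕ) (φ : ℝ → ℝ)

noncomputable def interpN (x s : ℝ) : ℝ[X] :=
  Lagrange.interpolate (range (N+1)) (fun i : ℕ => x + i * s) (fun i : ℕ => φ (x + i * s))

lemma nodes_inj (x : ℝ) {s : ℝ} (hs : s ≠ 0) :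
    Set.InjOn (fun i : ℕ => x + i * s) (range (N+1)) := by
  intro i _ j _ hij
  simp only [add_right_inj] at hij
  exact_mod_cast mul_right_cancel₀ hs hij

lemma interpN_natDegree_le (x : ℝ) {s : ℝ} (hs : s ≠ 0) : (interpN N φ x s).natDegree ≤ N := by
  have hdeg := Lagrange.degree_interpolate_lt (fun i : ℕ => φ (x + i * s)) (nodes_inj N x hs)
  rw [card_range] at hdeg
  by_cases hp : interpN N φ x s = 0
  · rw [hp]; simp
  · have := (natDegree_lt_iff_degree_lt hp).mpr hdeg
    omega

variable {N φ} (hd : ∀ x s : ℝ, (fwdDiff s)^[N+1] φ x = 0)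
include hd

lemma interp_grid (x : ℝ) {s : ℝ} (hs : s ≠ 0) (n : ℕ) :
    φ (x + n * s) = (interpN N φ x s).eval (x + n * s) := by
  have hδp : ∀ y, (fwdDiff s)^[N+1] (fun t => (interpN N φ x s).eval t) y = 0 :=
    fun y => polyEval_fwdDiff_iter_eq_zero N _ (interpN_natDegree_le N φ x hs) s y
  have h1 := shift_eq_sum_trunc (fun y => hd y s) x n
  have h2 := shift_eq_sum_trunc hδp x n
  rw [nsmul_eq_mul] at h1 h2
  rw [h1, h2]
  apply Finset.sum_congr rfl
  intro k hk
  rw [mem_range] at hk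
  congr 1
  apply fwdDiff_iter_congr
  intro j hj
  rw [nsmul_eq_mul]
  rw [interpN]
  exact (Lagrange.eval_interpolate_at_node (i := j) (fun i : ℕ => φ (x + i * s))
    (nodes_inj N x hs) (mem_range.mpr (by omega))).symm

lemma interp_half (x : ℝ) {s : ℝ} (hs : s ≠ 0) :
    interpN N φ x (s/2) = interpN N φ x s := by
  have h2 : s/2 ≠ 0 := div_ne_zero hs two_ne_zero
  apply Lagrange.eq_interpolate_of_eval_eq _ (nodes_inj N x hs)
  · rw [card_range]
    have hdeg := Lagrange.degree_interpolate_lt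
      (fun i : ℕ => φ (x + i * (s/2))) (nodes_inj N x h2)
    rw [card_range] at hdeg
    exact hdeg
  · intro i hi
    have := (interp_grid hd x h2 (2*i)).symm
    rw [show x + ((2*i : ℕ) : ℝ) * (s/2) = x + i * s by push_cast; ring] at this
    exact this

lemma interp_pow (x : ℝ) {s : ℝ} (hs : s ≠ 0) (k : ℕ) :
    interpN N φ x (s / 2^k) = interpN N φ x s := by
  induction k with
  | zero => norm_num
  | succ k IH =>
    have hks : s / 2^k ≠ 0 := by
      apply div_ne_zero hs; positivity
    rw [show s / 2^(k+1) = (s / 2^k) / 2 by rw [div_div]; ring_nf, interp_half hd x hks, IH]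

lemma eval_on_Ici (hc : Continuous φ) (x : ℝ) {s : ℝ} (hs : 0 < s) (t : ℝ) (ht : x ≤ t) :
    φ t = (interpN N φ x s).eval t := by
  set p := interpN N φ x s with hp
  have hE : IsClosed {y : ℝ | φ y = p.eval y} :=
    isClosed_eq hc (Polynomial.continuous p)
  set u : ℕ → ℝ := fun k => x + (⌊(t - x) * 2^k / s⌋₊ : ℕ) * (s / 2^k) with hu
  have hmem : ∀ k, u k ∈ {y : ℝ | φ y = p.eval y} := by
    intro k
    have hks : s / 2^k ≠ 0 := by positivity
    have := interp_grid hd x hks ⌊(t - x) * 2^k / s⌋₊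
    rw [interp_pow hd x hs.ne' k] at this
    exact this
  have hbound : ∀ k : ℕ, t - s/2^k < u k ∧ u k ≤ t := by
    intro k
    have h2k : (0:ℝ) < 2^k := by positivity
    have hnn : 0 ≤ (t - x) * 2^k / s := by
      apply div_nonneg _ hs.le
      apply mul_nonneg (by linarith) h2k.le
    set a := (t - x) * 2^k / s with ha
    have hax : a * (s / 2^k) = t - x := by
      rw [ha]
      field_simp
    constructor
    · have h1 := Nat.lt_floor_add_one a
      have h2 : a * (s/2^k) < ((⌊a⌋₊ : ℝ) + 1) * (s/2^k) :=
        mul_lt_mul_of_pos_right h1 (by positivity)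
      rw [hax, add_mul, one_mul] at h2
      simp only [hu]
      linarith
    · have h1 := Nat.floor_le hnn
      have h2 : (⌊a⌋₊ : ℝ) * (s/2^k) ≤ a * (s/2^k) :=
        mul_le_mul_of_nonneg_right h1 (by positivity)
      rw [hax] at h2
      simp only [hu]
      linarith
  have htend : Tendsto u atTop (nhds t) := by
    have hpow : Tendsto (fun k : ℕ => s / 2^k) atTop (nhds 0) :=
      tendsto_const_nhds.div_atTop (tendsto_pow_atTop_atTop_of_one_lt one_lt_two)
    have h1 : Tendsto (fun k : ℕ => t - s/2^k) atTop (nhds t) := by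
      simpa using tendsto_const_nhds.sub hpow
    exact tendsto_of_tendsto_of_tendsto_of_le_of_le h1 tendsto_const_nhds
      (fun k => (hbound k).1.le) (fun k => (hbound k).2)
  exact hE.mem_of_tendsto htend (Filter.Eventually.of_forall hmem)

end oneD

lemma one_dim (φ : ℝ → ℝ) (hc : Continuous φ) (N : ℕ)
    (hd : ∀ x s : ℝ, (fwdDiff s)^[N+1] φ x = 0) :
    ∃ p : ℝ[X], p.natDegree ≤ N ∧ ∀ t, φ t = p.eval t := by
  refine ⟨interpN N φ 0 1, interpN_natDegree_le N φ 0 one_ne_zero, fun t => ?_⟩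
  rcases le_or_gt 0 t with h | h
  · exact eval_on_Ici hd hc 0 one_pos t h
  · have h1 : ∀ y, t ≤ y → φ y = (interpN N φ t 1).eval y :=
      fun y hy => eval_on_Ici hd hc t one_pos y hy
    have h2 : ∀ y, (0:ℝ) ≤ y → φ y = (interpN N φ 0 1).eval y :=
      fun y hy => eval_on_Ici hd hc 0 one_pos y hy
    have heq : interpN N φ t 1 = interpN N φ 0 1 := by
      apply Polynomial.eq_of_infinite_eval_eq
      apply (Set.Ici_infinite (0:ℝ)).mono
      intro y hy
      rw [Set.mem_setOf_eq, ← h2 y hy, ← h1 y (le_trans h.le hy)]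
    rw [← heq]
    exact h1 t le_rfl

open Finset Function Polynomial

lemma continuous_snoc_left {d : ℕ} (c : ℝ) :
    Continuous (fun x : Fin d → ℝ => (Fin.snoc x c : Fin (d+1) → ℝ)) := by
  apply continuous_pi
  intro i
  refine Fin.lastCases ?_ ?_ i
  · simpa only [Fin.snoc_last] using continuous_const
  · intro j
    simpa only [Fin.snoc_castSucc] using continuous_apply j

lemma continuous_snoc_right {d : ℕ} (x : Fin d → ℝ) :
    Continuous (fun s : ℝ => (Fin.snoc x s : Fin (d+1) → ℝ)) := by
  apply continuous_pi
  intro i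
  refine Fin.lastCases ?_ ?_ i
  · simpa only [Fin.snoc_last] using continuous_id'
  · intro j
    simpa only [Fin.snoc_castSucc] using continuous_const

lemma snoc_add {d : ℕ} (x h : Fin d → ℝ) (c e : ℝ) :
    (Fin.snoc (x + h) (c + e) : Fin (d+1) → ℝ) = Fin.snoc x c + Fin.snoc h e := by
  funext i
  refine Fin.lastCases ?_ ?_ i
  · simp [Fin.snoc_last]
  · intro j
    simp [Fin.snoc_castSucc]

lemma eval_aeval_X {d : ℕ} (y : Fin (d+1) → ℝ) (b : ℝ[X]) :
    MvPolynomial.eval y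
      (Polynomial.aeval (MvPolynomial.X (Fin.last d) : MvPolynomial (Fin (d+1)) ℝ) b)
      = b.eval (y (Fin.last d)) := by
  induction b using Polynomial.induction_on with
  | C c => simp
  | add p q hp hq => simp [hp, hq]
  | monomial n c ih => simp

lemma homog_eval_smul {d n : ℕ} {P : MvPolynomial (Fin d) ℝ} (hP : P.IsHomogeneous n)
    (r : ℝ) (x : Fin d → ℝ) :
    MvPolynomial.eval (r • x) P = r^n * MvPolynomial.eval x P := by
  rw [MvPolynomial.eval_eq, MvPolynomial.eval_eq, Finset.mul_sum]
  apply Finset.sum_congr rfl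
  intro dd hdd
  rw [MvPolynomial.mem_support_iff] at hdd
  have hsum : ∑ i ∈ dd.support, dd i = n := by
    have := hP hdd
    rw [Finsupp.weight_apply, Finsupp.sum] at this
    simpa using this
  have hprod : ∏ i ∈ dd.support, (r • x) i ^ dd i = r^n * ∏ i ∈ dd.support, x i ^ dd i := by
    simp only [Pi.smul_apply, smul_eq_mul, mul_pow]
    rw [Finset.prod_mul_distrib, Finset.prod_pow_eq_pow_sum, hsum]
  rw [hprod]
  ring
lemma main_aux (N : ℕ) : ∀ (d : ℕ) (f : (Fin d → ℝ) → ℝ), Continuous f →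
    (∀ (x h : Fin d → ℝ), (fwdDiff h)^[N+1] f x = 0) →
    ∃ P : MvPolynomial (Fin d) ℝ, ∀ x, f x = MvPolynomial.eval x P := by
  intro d
  induction d with
  | zero =>
    intro f _ _
    refine ⟨MvPolynomial.C (f (fun i => i.elim0)), fun x => ?_⟩
    rw [MvPolynomial.eval_C]
    congr 1
    funext i
    exact i.elim0
  | succ d IH =>
    intro f hc hd
    have hvinj : Set.InjOn (fun i : ℕ => (i:ℝ)) (range (N+1)) :=
      fun i _ j _ h => Nat.cast_injective h
    -- sections at fixed last coordinate are polynomials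
    have hsec : ∀ c : ℝ, ∃ P : MvPolynomial (Fin d) ℝ,
        ∀ x, f (Fin.snoc x c) = MvPolynomial.eval x P := by
      intro c
      apply IH _ (hc.comp (continuous_snoc_left c))
      intro x h
      have he : ∀ a : Fin d → ℝ, (Fin.snoc (a + h) c : Fin (d+1) → ℝ)
          = Fin.snoc a c + Fin.snoc h 0 := by
        intro a
        simpa using snoc_add a h c 0
      have hcomp := fwdDiff_iter_comp (fun a : Fin d → ℝ => (Fin.snoc a c : Fin (d+1) → ℝ))
        h (Fin.snoc h 0) he f (N+1) x
      exact hcomp.trans (hd _ _)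
    choose Psec hPsec using hsec
    -- fibers: as functions of the last coordinate, Lagrange representation
    have hfib : ∀ (x : Fin d → ℝ) (s : ℝ),
        f (Fin.snoc x s) = ∑ j ∈ range (N+1),
          f (Fin.snoc x (j : ℝ)) *
            (Lagrange.basis (range (N+1)) (fun i : ℕ => (i:ℝ)) j).eval s := by
      intro x s
      have hyp : ∀ t σ : ℝ, (fwdDiff σ)^[N+1] (fun s' => f (Fin.snoc x s')) t = 0 := by
        intro t σ
        have he : ∀ a : ℝ, (Fin.snoc x (a + σ) : Fin (d+1) → ℝ)
            = Fin.snoc x a + Fin.snoc (0 : Fin d → ℝ) σ := by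
          intro a
          simpa using snoc_add x 0 a σ
        have hcomp := fwdDiff_iter_comp (fun a : ℝ => (Fin.snoc x a : Fin (d+1) → ℝ))
          σ (Fin.snoc (0 : Fin d → ℝ) σ) he f (N+1) t
        exact hcomp.trans (hd _ _)
      obtain ⟨p, hdeg, hval⟩ := one_dim (fun s' => f (Fin.snoc x s'))
        (hc.comp (continuous_snoc_right x)) N hyp
      have hdlt : p.degree < (#(range (N+1)) : WithBot ℕ) := by
        rw [card_range]
        exact lt_of_le_of_lt degree_le_natDegree
          (by exact_mod_cast Nat.lt_succ_of_le hdeg)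
      have hrep := Lagrange.eq_interpolate hvinj hdlt
      rw [hval s, hrep, Lagrange.interpolate_apply, eval_finset_sum]
      apply Finset.sum_congr rfl
      intro j _
      rw [eval_mul, eval_C, ← hval]
  -- assemble the multivariate polynomial
    refine ⟨∑ j ∈ range (N+1), MvPolynomial.rename Fin.castSucc (Psec (j:ℝ)) *
      Polynomial.aeval (MvPolynomial.X (Fin.last d))
        (Lagrange.basis (range (N+1)) (fun i : ℕ => (i:ℝ)) j), fun y => ?_⟩
    rw [map_sum]
    have : ∀ j ∈ range (N+1),
        MvPolynomial.eval y (MvPolynomial.rename Fin.castSucc (Psec (j:ℝ)) *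
          Polynomial.aeval (MvPolynomial.X (Fin.last d))
            (Lagrange.basis (range (N+1)) (fun i : ℕ => (i:ℝ)) j))
        = f (Fin.snoc (Fin.init y) (j:ℝ)) *
            (Lagrange.basis (range (N+1)) (fun i : ℕ => (i:ℝ)) j).eval (y (Fin.last d)) := by
      intro j _
      rw [map_mul, MvPolynomial.eval_rename, eval_aeval_X, ← hPsec]
      rfl
    rw [Finset.sum_congr rfl this, ← hfib (Fin.init y) (y (Fin.last d)), Fin.snoc_init_self]
theorem continuous_genPolynomial_is_polynomial {d : ℕ}
    (f : (Fin d → ℝ) → ℝ) (hf : Continuous f) (N : ℕ)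
    (hdiff : ∀ x h : Fin d → ℝ, (fdiff h)^[N + 1] f x = 0) :
    ∃ P : MvPolynomial (Fin d) ℝ,
      P.totalDegree ≤ N ∧ ∀ x, f x = MvPolynomial.eval x P := by
  have hdiff' : ∀ (x h : Fin d → ℝ), (fwdDiff h)^[N+1] f x = 0 := hdiff
  obtain ⟨P, hP⟩ := main_aux N d f hf hdiff'
  have hzero : ∀ m, N < m → MvPolynomial.homogeneousComponent m P = 0 := by
    intro m hm
    rcases le_or_gt m P.totalDegree with hmD | hDm
    swap
    · exact MvPolynomial.homogeneousComponent_eq_zero m P hDm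
    · have key : ∀ v : Fin d → ℝ,
          MvPolynomial.eval v (MvPolynomial.homogeneousComponent m P) = 0 := by
        intro v
        have hcφ : Continuous (fun t : ℝ => f (t • v)) :=
          hf.comp (continuous_id.smul continuous_const)
        have hdφ : ∀ t σ : ℝ, (fwdDiff σ)^[N+1] (fun t' : ℝ => f (t' • v)) t = 0 := by
          intro t σ
          have he : ∀ a : ℝ, (a + σ) • v = a • v + σ • v := fun a => add_smul a σ v
          have hcomp := fwdDiff_iter_comp (fun a : ℝ => a • v) σ (σ • v) he f (N+1) t
          exact hcomp.trans (hdiff' _ _)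
        obtain ⟨q, hqdeg, hqval⟩ := one_dim _ hcφ N hdφ
        set r : ℝ[X] := ∑ i ∈ range (P.totalDegree + 1),
          Polynomial.C (MvPolynomial.eval v (MvPolynomial.homogeneousComponent i P)) * X^i
          with hr
        have hrval : ∀ t : ℝ, r.eval t = f (t • v) := by
          intro t
          have h1 : MvPolynomial.eval (t • v) P
              = ∑ i ∈ range (P.totalDegree + 1),
                  MvPolynomial.eval (t • v) (MvPolynomial.homogeneousComponent i P) := by
            conv_lhs => rw [← MvPolynomial.sum_homogeneousComponent P]
            rw [map_sum]
          rw [hP (t • v), h1, hr, eval_finset_sum]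
          apply Finset.sum_congr rfl
          intro i _
          rw [eval_mul, eval_C, eval_pow, eval_X,
            homog_eval_smul (MvPolynomial.homogeneousComponent_isHomogeneous i P) t v]
          ring
        have hrq : r = q := Polynomial.funext (fun t => by rw [hrval t, hqval t])
        have hcoeff : r.coeff m = 0 := by
          rw [hrq]
          exact coeff_eq_zero_of_natDegree_lt (by omega)
        rw [hr, finset_sum_coeff] at hcoeff
        rw [Finset.sum_eq_single_of_mem m (mem_range.mpr (by omega))] at hcoeff
        · rwa [coeff_C_mul, coeff_X_pow, if_pos rfl, mul_one] at hcoeff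
        · intro i _ hi
          rw [coeff_C_mul, coeff_X_pow, if_neg (fun hh => hi hh.symm), mul_zero]
      exact MvPolynomial.funext (fun v => by rw [key v, map_zero])
  refine ⟨∑ i ∈ range (N+1), MvPolynomial.homogeneousComponent i P, ?_, ?_⟩
  · apply le_trans (MvPolynomial.totalDegree_finset_sum _ _)
    apply Finset.sup_le
    intro i hi
    rw [mem_range] at hi
    exact le_trans (MvPolynomial.homogeneousComponent_isHomogeneous i P).totalDegree_le
      (by omega)
  · intro x
    rw [hP x]
    congr 1
    set M := max P.totalDegree N with hM
    have hbig1 : ∑ i ∈ range (M+1), MvPolynomial.homogeneousComponent i P = P := by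
      rw [← Finset.sum_subset (range_subset_range.mpr (show P.totalDegree + 1 ≤ M + 1 by omega))]
      · exact MvPolynomial.sum_homogeneousComponent P
      · intro i _ hi
        rw [mem_range, not_lt] at hi
        exact MvPolynomial.homogeneousComponent_eq_zero i P (by omega)
    have hbig2 : ∑ i ∈ range (N+1), MvPolynomial.homogeneousComponent i P
        = ∑ i ∈ range (M+1), MvPolynomial.homogeneousComponent i P := by
      apply Finset.sum_subset (range_subset_range.mpr (show N + 1 ≤ M + 1 by omega))
      intro i _ hi
      rw [mem_range, not_lt] at hi
      exact hzero i (by omega)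
    rw [hbig2, hbig1]
end
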